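/- Let N ≥ 3, μ > 0, ω > 0, α ∈ ℝ, ε ∈ {-1,+1}^N and a ≥ 0, and let Ψ be the N-tuple with components ψ_i = φ_{ω, ε_i a} restricted to [0,∞). Then Ψ satisfies the δ vertex condition of strength α (i.e. ψ_1(0) = ⋯ = ψ_N(0) and Σ_{i=1}^N ψ_i′(0) = α ψ_1(0)) if and only if tanh(μ√ω a) · Σ_{i=1}^N ε_i = α/√ω. -/

import Mathlib

open Real MeasureTheory

/-- `sech y = 1 / cosh y`. -/
noncomputable def sech (y : ℝ) : ℝ := 1 / Real.cosh y

/-- The half-line soliton profile `φ_{ω,a}(x) = [(μ+1)ω]^{1/(2μ)} sech^{1/μ}(μ√ω (x-a))`. -/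
noncomputable def solProfile (μ ω a : ℝ) (x : ℝ) : ℝ :=
  ((μ + 1) * ω) ^ (1 / (2 * μ)) * sech (μ * Real.sqrt ω * (x - a)) ^ (1 / μ)

lemma sech_pos (y : ℝ) : 0 < sech y := by
  unfold sech
  positivity

lemma sech_neg (y : ℝ) : sech (-y) = sech y := by
  simp [sech, Real.cosh_neg]

lemma deriv_solProfile (μ ω a' : ℝ) (hμ : 0 < μ) :
    deriv (solProfile μ ω a') 0
      = -(Real.sqrt ω) * Real.tanh (μ * Real.sqrt ω * (0 - a')) * solProfile μ ω a' 0 := by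
  set k := μ * Real.sqrt ω with hk
  have hcosh : Real.cosh (k * ((0:ℝ) - a')) ≠ 0 := ne_of_gt (Real.cosh_pos _)
  have h1 : HasDerivAt (fun x : ℝ => k * (x - a')) k 0 := by
    simpa using ((hasDerivAt_id (0:ℝ)).sub_const a').const_mul k
  have h2 : HasDerivAt (fun x : ℝ => Real.cosh (k * (x - a')))
      (Real.sinh (k * ((0:ℝ) - a')) * k) 0 :=
    (Real.hasDerivAt_cosh _).comp 0 h1
  have h3 : HasDerivAt (fun x : ℝ => sech (k * (x - a')))
      (-(Real.sinh (k * ((0:ℝ) - a')) * k) / Real.cosh (k * ((0:ℝ) - a')) ^ 2) 0 := by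
    have := h2.inv hcosh
    simp only [sech, one_div]
    exact this
  have h4 : HasDerivAt (fun x : ℝ => sech (k * (x - a')) ^ (1/μ))
      ((-(Real.sinh (k * ((0:ℝ) - a')) * k) / Real.cosh (k * ((0:ℝ) - a')) ^ 2) * (1/μ) *
        sech (k * ((0:ℝ) - a')) ^ (1/μ - 1)) 0 :=
    h3.rpow_const (Or.inl (sech_pos _).ne')
  have h5 := h4.const_mul (((μ + 1) * ω) ^ (1 / (2 * μ)))
  have h6 : deriv (solProfile μ ω a') 0 = ((μ + 1) * ω) ^ (1 / (2 * μ)) *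
      ((-(Real.sinh (k * ((0:ℝ) - a')) * k) / Real.cosh (k * ((0:ℝ) - a')) ^ 2) * (1/μ) *
        sech (k * ((0:ℝ) - a')) ^ (1/μ - 1)) := h5.deriv
  rw [h6]
  have hs : sech (k * ((0:ℝ) - a')) ^ (1/μ - 1)
      = sech (k * ((0:ℝ) - a')) ^ (1/μ) * Real.cosh (k * ((0:ℝ) - a')) := by
    rw [Real.rpow_sub (sech_pos _), Real.rpow_one]
    field_simp [sech]
    rw [div_eq_mul_inv, sech, one_div, inv_inv]
  rw [hs, solProfile, Real.tanh_eq_sinh_div_cosh, ← hk]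
  field_simp
  ring

/-- for `N ≥ 3`, `μ > 0`, `ω > 0`, `α ∈ ℝ`, signs `ε ∈ {-1,1}^N` and `a ≥ 0`,
the `N`-tuple with components `φ_{ω, ε_i a}` satisfies the `δ` vertex condition of strength `α`
(common value at `0` and `Σ_i ψ_i′(0) = α ψ_1(0)`) if and only if
`tanh(μ√ω a) Σ_i ε_i = α / √ω`. -/
theorem delta_condition_iff_tanh (N : ℕ) (hN : 3 ≤ N) (μ ω α : ℝ)
    (hμ : 0 < μ) (hω : 0 < ω)
    (ε : Fin N → ℝ) (hε : ∀ i, ε i = 1 ∨ ε i = -1) (a : ℝ) (ha : 0 ≤ a) :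
    ((∀ i j : Fin N, solProfile μ ω (ε i * a) 0 = solProfile μ ω (ε j * a) 0) ∧
      (∑ i : Fin N, deriv (solProfile μ ω (ε i * a)) 0)
        = α * solProfile μ ω (ε ⟨0, by omega⟩ * a) 0)
    ↔ Real.tanh (μ * Real.sqrt ω * a) * (∑ i : Fin N, ε i) = α / Real.sqrt ω := by
  set k := μ * Real.sqrt ω with hk
  set P : ℝ := ((μ + 1) * ω) ^ (1 / (2 * μ)) * sech (k * a) ^ (1 / μ) with hP
  have hPpos : 0 < P := by
    rw [hP]
    have h1 : (0:ℝ) < (μ + 1) * ω := by positivity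
    have := sech_pos (k * a)
    positivity
  have hval : ∀ i : Fin N, solProfile μ ω (ε i * a) 0 = P := by
    intro i
    rw [solProfile, hP, ← hk]
    congr 1
    rcases hε i with h | h <;> rw [h]
    · rw [show k * ((0:ℝ) - 1 * a) = -(k * a) by ring, sech_neg]
    · rw [show k * ((0:ℝ) - (-1) * a) = k * a by ring]
  have hder : ∀ i : Fin N, deriv (solProfile μ ω (ε i * a)) 0
      = ε i * Real.sqrt ω * Real.tanh (k * a) * P := by
    intro i
    rw [deriv_solProfile μ ω (ε i * a) hμ, hval i, ← hk]
    rcases hε i with h | h <;> rw [h]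
    · rw [show k * ((0:ℝ) - 1 * a) = -(k * a) by ring, Real.tanh_neg]
      ring
    · rw [show k * ((0:ℝ) - (-1) * a) = k * a by ring]
      ring
  have hsum : (∑ i : Fin N, deriv (solProfile μ ω (ε i * a)) 0)
      = Real.sqrt ω * Real.tanh (k * a) * (∑ i : Fin N, ε i) * P := by
    have h : ∀ i : Fin N, deriv (solProfile μ ω (ε i * a)) 0
        = Real.sqrt ω * Real.tanh (k * a) * P * ε i := by
      intro i; rw [hder i]; ring
    simp only [h]
    rw [← Finset.mul_sum]
    ring
  have hsω : (0:ℝ) < Real.sqrt ω := Real.sqrt_pos.mpr hω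
  constructor
  · rintro ⟨-, h2⟩
    rw [hsum, hval] at h2
    have h3 : Real.sqrt ω * Real.tanh (k * a) * (∑ i : Fin N, ε i) = α :=
      mul_right_cancel₀ hPpos.ne' h2
    rw [eq_div_iff hsω.ne', ← h3]
    ring
  · intro h
    refine ⟨fun i j => by rw [hval i, hval j], ?_⟩
    rw [hsum, hval]
    rw [eq_div_iff hsω.ne'] at h
    rw [← h]
    ring
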